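/- Let G be continuously differentiable on an open interval containing [ν, μ] and (ν+μ)/(2m), with m ∈ (0,1] and s ∈ (0,1], and let W : [ν, μ] → ℝ be nonnegative, continuous, symmetric about (ν+μ)/2. If |G'| is (h,m)-convex with h(γ) = γ^s, then |((G(ν)+G(μ))/2) ∫_ν^μ W(x) dx − ∫_ν^μ W(x)G(x) dx| ≤ ((μ-ν)²/4) · ‖W‖_∞ · [ (1/(s+2))·(|G'(ν)| + |G'(μ)|) + 2m·B(2, s+1)·|G'((ν+μ)/(2m))| ], where B is the Euler Beta function. -/

import Mathlib

open Set MeasureTheory intervalIntegral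

theorem fejer_bound_sm_convex
    (ν μ m s a b : ℝ) (hνμ : ν < μ) (hm : m ∈ Set.Ioc (0:ℝ) 1) (hs : s ∈ Set.Ioc (0:ℝ) 1)
    (hab : Set.Icc ν μ ⊆ Set.Ioo a b) (hmid : (ν + μ) / (2 * m) ∈ Set.Ioo a b)
    (G W : ℝ → ℝ)
    (hG : ContDiffOn ℝ 1 G (Set.Ioo a b))
    (hG' : ∀ x ∈ Set.Ioo a b, ∀ y ∈ Set.Ioo a b, ∀ γ ∈ Set.Icc (0:ℝ) 1,
      |deriv G (γ * x + m * (1 - γ) * y)|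
        ≤ γ ^ s * |deriv G x| + m * (1 - γ) ^ s * |deriv G y|)
    (hWnonneg : ∀ x ∈ Set.Icc ν μ, 0 ≤ W x)
    (hWcont : ContinuousOn W (Set.Icc ν μ))
    (hWsym : ∀ x ∈ Set.Icc ν μ, W (ν + μ - x) = W x) :
    |(G ν + G μ) / 2 * (∫ x in ν..μ, W x) - ∫ x in ν..μ, W x * G x|
      ≤ (μ - ν) ^ 2 / 4 * sSup (W '' Set.Icc ν μ) *
        ((1 / (s + 2)) * (|deriv G ν| + |deriv G μ|)
          + 2 * m * (∫ γ in (0:ℝ)..1, γ * (1 - γ) ^ s)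
              * |deriv G ((ν + μ) / (2 * m))|) := by
  obtain ⟨hm0, hm1⟩ := hm
  obtain ⟨hs0, hs1⟩ := hs
  have hle : ν ≤ μ := hνμ.le
  have hνI : ν ∈ Set.Icc ν μ := ⟨le_rfl, hle⟩
  have hμI : μ ∈ Set.Icc ν μ := ⟨hle, le_rfl⟩
  set g := deriv G with hgdef
  set mid := (ν + μ) / 2 with hmiddef
  set cp := (ν + μ) / (2 * m) with hcpdef
  set c := (μ - ν) / 2 with hcdef
  have hc0 : 0 < c := by rw [hcdef]; linarith
  have hmidI : mid ∈ Set.Icc ν μ := ⟨by rw [hmiddef]; linarith, by rw [hmiddef]; linarith⟩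
  set M := sSup (W '' Set.Icc ν μ) with hMdef
  have hWbdd : ∀ x ∈ Set.Icc ν μ, W x ≤ M := fun x hx =>
    le_csSup (isCompact_Icc.image_of_continuousOn hWcont).bddAbove ⟨x, hx, rfl⟩
  have hM0 : 0 ≤ M := le_trans (hWnonneg ν hνI) (hWbdd ν hνI)
  -- continuity facts
  have hGc : ContinuousOn G (Set.Icc ν μ) := hG.continuousOn.mono hab
  have hgc : ContinuousOn g (Set.Ioo a b) :=
    hG.continuousOn_deriv_of_isOpen isOpen_Ioo le_rfl
  have hgcI : ContinuousOn g (Set.Icc ν μ) := hgc.mono hab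
  have hsubI : ∀ x ∈ Set.Icc ν μ, ∀ y ∈ Set.Icc ν μ, Set.uIcc x y ⊆ Set.Icc ν μ := by
    intro x hx y hy
    rw [← Set.uIcc_of_le hle] at hx hy
    rw [← Set.uIcc_of_le hle]
    exact Set.uIcc_subset_uIcc hx hy
  have hci : ∀ f : ℝ → ℝ, ContinuousOn f (Set.Icc ν μ) → ∀ x ∈ Set.Icc ν μ,
      ∀ y ∈ Set.Icc ν μ, IntervalIntegrable f volume x y :=
    fun f hf x hx y hy => (hf.mono (hsubI x hx y hy)).intervalIntegrable
  have hWi : ∀ x ∈ Set.Icc ν μ, ∀ y ∈ Set.Icc ν μ, IntervalIntegrable W volume x y :=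
    hci W hWcont
  -- the primitive
  set P := fun x => ∫ t in ν..x, W t with hPdef
  have hPcont : ContinuousOn P (Set.Icc ν μ) := by
    have := intervalIntegral.continuousOn_primitive_interval
      (μ := volume) (a := ν) (b := μ) (f := W)
      (by rw [Set.uIcc_of_le hle]; exact hWcont.integrableOn_Icc)
    rwa [Set.uIcc_of_le hle] at this
  have hPd : ∀ x ∈ Set.Ioo ν μ, HasDerivAt P (W x) x := by
    intro x hx
    exact intervalIntegral.integral_hasDerivAt_right
      (hWi ν hνI x (Set.Ioo_subset_Icc_self hx))
      ((hWcont.mono Set.Ioo_subset_Icc_self).stronglyMeasurableAtFilter isOpen_Ioo x hx)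
      (hWcont.continuousAt (Icc_mem_nhds hx.1 hx.2))
  have hGd : ∀ x ∈ Set.Ioo a b, HasDerivAt G (g x) x := fun x hx =>
    ((hG.differentiableOn one_ne_zero).differentiableAt (isOpen_Ioo.mem_nhds hx)).hasDerivAt
  -- integrabilities
  have hint1 : IntervalIntegrable (fun x => W x * G x) volume ν μ := by
    apply ContinuousOn.intervalIntegrable
    rw [Set.uIcc_of_le hle]; exact hWcont.mul hGc
  have hint2 : IntervalIntegrable (fun x => P x * g x) volume ν μ := by
    apply ContinuousOn.intervalIntegrable
    rw [Set.uIcc_of_le hle]; exact hPcont.mul hgcI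
  -- integration by parts
  have hibp : ∫ x in ν..μ, (W x * G x + P x * g x) = P μ * G μ - P ν * G ν := by
    apply intervalIntegral.integral_eq_sub_of_hasDerivAt_of_le hle (hPcont.mul hGc)
    · intro x hx
      exact (hPd x hx).mul (hGd x (hab (Set.Ioo_subset_Icc_self hx)))
    · exact hint1.add hint2
  have hPν : P ν = 0 := intervalIntegral.integral_same
  have hWG : ∫ x in ν..μ, W x * G x = P μ * G μ - ∫ x in ν..μ, P x * g x := by
    rw [intervalIntegral.integral_add hint1 hint2, hPν] at hibp
    linarith
  have hftc : ∫ x in ν..μ, g x = G μ - G ν := by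
    apply intervalIntegral.integral_eq_sub_of_hasDerivAt_of_le hle hGc
    · intro x hx; exact hGd x (hab (Set.Ioo_subset_Icc_self hx))
    · exact hci g hgcI ν hνI μ hμI
  -- symmetry : P mid = P μ / 2
  have hsym1 : (∫ x in mid..μ, W x) = ∫ x in ν..mid, W x := by
    have h1 : (∫ x in mid..μ, W x) = ∫ x in mid..μ, W (ν + μ - x) := by
      apply intervalIntegral.integral_congr
      intro x hx
      exact (hWsym x (hsubI mid hmidI μ hμI hx)).symm
    rw [h1, intervalIntegral.integral_comp_sub_left W (ν + μ)]
    have e1 : ν + μ - μ = ν := by ring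
    have e2 : ν + μ - mid = mid := by rw [hmiddef]; ring
    rw [e1, e2]
  have hPmid : P mid = P μ / 2 := by
    have := intervalIntegral.integral_add_adjacent_intervals
      (hWi ν hνI mid hmidI) (hWi mid hmidI μ hμI)
    simp only [hPdef]
    rw [hsym1] at this
    show (∫ t in ν..mid, W t) = (∫ t in ν..μ, W t) / 2
    linarith
  -- pointwise bound on the kernel
  have hq : ∀ x ∈ Set.Icc ν μ, |P x - P μ / 2| ≤ M * |x - mid| := by
    intro x hx
    have h1 : P x - P mid = ∫ t in mid..x, W t :=
      intervalIntegral.integral_interval_sub_left (hWi ν hνI x hx) (hWi ν hνI mid hmidI)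
    rw [← hPmid, h1]
    have h2 : ∀ t ∈ Set.uIoc mid x, ‖W t‖ ≤ M := by
      intro t ht
      have htI : t ∈ Set.Icc ν μ := hsubI mid hmidI x hx (Set.uIoc_subset_uIcc ht)
      rw [Real.norm_eq_abs, abs_of_nonneg (hWnonneg t htI)]
      exact hWbdd t htI
    have := intervalIntegral.norm_integral_le_of_norm_le_const h2
    rwa [Real.norm_eq_abs] at this
  -- main rearrangement
  have hT : (G ν + G μ) / 2 * (∫ x in ν..μ, W x) - (∫ x in ν..μ, W x * G x)
      = ∫ x in ν..μ, (P x - P μ / 2) * g x := by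
    have hsplit : ∫ x in ν..μ, (P x - P μ / 2) * g x
        = (∫ x in ν..μ, P x * g x) - P μ / 2 * ∫ x in ν..μ, g x := by
      rw [← intervalIntegral.integral_const_mul, ← intervalIntegral.integral_sub hint2]
      · congr 1; ext x; ring
      · exact hci _ (continuousOn_const.mul hgcI) ν hνI μ hμI
    have hPμ : (∫ x in ν..μ, W x) = P μ := rfl
    rw [hsplit, hWG, hftc, hPμ]
    ring
  -- abbreviations
  set B := ∫ γ in (0:ℝ)..1, γ * (1 - γ) ^ s with hBdef
  set f := fun x => M * |x - mid| * |g x| with hfdef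
  have hfc : ContinuousOn f (Set.Icc ν μ) :=
    (continuousOn_const.mul
      ((continuous_id.sub continuous_const).abs.continuousOn)).mul hgcI.abs
  have hmcp : m * cp = mid := by
    rw [hcpdef, hmiddef]; field_simp
  have hgν : |deriv G ν| = |g ν| := rfl
  have hgμ : |deriv G μ| = |g μ| := rfl
  have hgcp : |deriv G cp| = |g cp| := rfl
  -- continuity of rpow pieces
  have hc1 : Continuous fun γ : ℝ => γ ^ (s + 1) := Real.continuous_rpow_const (by linarith)
  have hc2 : Continuous fun γ : ℝ => γ * (1 - γ) ^ s :=
    continuous_id.mul ((Real.continuous_rpow_const hs0.le).comp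
      (continuous_const.sub continuous_id))
  have hpow_eq : ∀ γ : ℝ, 0 ≤ γ → γ * γ ^ s = γ ^ (s + 1) := by
    intro γ hγ
    rcases eq_or_lt_of_le hγ with h | h
    · rw [← h, Real.zero_rpow (by linarith : s + 1 ≠ 0), mul_comm,
        Real.zero_rpow (ne_of_gt hs0), mul_zero]
    · rw [Real.rpow_add_one (ne_of_gt h), mul_comm]
  -- evaluation of ∫ γ^(s+1)
  have hval : (∫ γ in (0:ℝ)..1, γ ^ (s + 1)) = 1 / (s + 2) := by
    rw [integral_rpow (Or.inl (by linarith : (-1:ℝ) < s + 1))]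
    rw [Real.one_rpow, Real.zero_rpow (by linarith : s + 1 + 1 ≠ 0)]
    rw [show s + 1 + 1 = s + 2 by ring]; norm_num
  -- generic half-interval bound
  have hhalf : ∀ e ∈ Set.Ioo a b, ∀ d : ℝ, |d| = c →
      (∀ γ : ℝ, d * γ + mid = γ * e + m * (1 - γ) * cp) →
      (∫ γ in (0:ℝ)..1, f (d * γ + mid))
        ≤ M * c * ((1 / (s + 2)) * |g e| + m * B * |g cp|) := by
    intro e he d hdc hpt
    have hmem : ∀ γ ∈ Set.Icc (0:ℝ) 1, d * γ + mid ∈ Set.Icc ν μ := by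
      intro γ hγ
      have h1 : |d * γ| ≤ c := by
        rw [abs_mul, hdc, abs_of_nonneg hγ.1]
        nlinarith [hγ.2]
      obtain ⟨h2, h3⟩ := abs_le.mp h1
      constructor
      · rw [hmiddef]; rw [hcdef] at h2; linarith
      · rw [hmiddef]; rw [hcdef] at h3; linarith
    have hint_lhs : IntervalIntegrable (fun γ => f (d * γ + mid)) volume 0 1 := by
      apply ContinuousOn.intervalIntegrable
      rw [Set.uIcc_of_le zero_le_one]
      exact hfc.comp ((continuous_const.mul continuous_id).add
        continuous_const).continuousOn hmem
    have hint_rhs : IntervalIntegrable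
        (fun γ : ℝ => M * c * (γ ^ (s+1) * |g e| + m * (γ * (1 - γ) ^ s) * |g cp|))
        volume 0 1 :=
      (continuous_const.mul ((hc1.mul continuous_const).add
        ((continuous_const.mul hc2).mul continuous_const))).intervalIntegrable 0 1
    calc (∫ γ in (0:ℝ)..1, f (d * γ + mid))
        ≤ ∫ γ in (0:ℝ)..1, M * c * (γ ^ (s+1) * |g e| + m * (γ * (1 - γ) ^ s) * |g cp|) := by
          apply intervalIntegral.integral_mono_on zero_le_one hint_lhs hint_rhs
          intro γ hγ
          have e1 : d * γ + mid - mid = d * γ := by ring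
          have h1 : f (d * γ + mid) = M * (c * γ) * |g (γ * e + m * (1 - γ) * cp)| := by
            show M * |d * γ + mid - mid| * |g (d * γ + mid)| = _
            rw [e1, hpt γ, abs_mul, hdc, abs_of_nonneg hγ.1]
          rw [h1]
          have h2 := hG' e he cp hmid γ hγ
          calc M * (c * γ) * |g (γ * e + m * (1 - γ) * cp)|
              ≤ M * (c * γ) * (γ ^ s * |g e| + m * (1 - γ) ^ s * |g cp|) := by
                apply mul_le_mul_of_nonneg_left h2
                have := hγ.1
                positivity
            _ = M * c * ((γ * γ ^ s) * |g e| + m * (γ * (1 - γ) ^ s) * |g cp|) := by ring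
            _ = M * c * (γ ^ (s+1) * |g e| + m * (γ * (1 - γ) ^ s) * |g cp|) := by
                rw [hpow_eq γ hγ.1]
      _ = M * c * ((1 / (s + 2)) * |g e| + m * B * |g cp|) := by
          rw [intervalIntegral.integral_const_mul]
          congr 1
          rw [intervalIntegral.integral_add (f := fun γ => γ ^ (s + 1) * |g e|)
            (g := fun γ => m * (γ * (1 - γ) ^ s) * |g cp|)
            ((hc1.mul continuous_const).intervalIntegrable 0 1)
            (((continuous_const.mul hc2).mul continuous_const).intervalIntegrable 0 1),
            intervalIntegral.integral_mul_const, hval]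
          congr 1
          have : (fun γ : ℝ => m * (γ * (1 - γ) ^ s) * |g cp|)
              = fun γ : ℝ => m * ((γ * (1 - γ) ^ s) * |g cp|) := by ext γ; ring
          rw [this, intervalIntegral.integral_const_mul, intervalIntegral.integral_mul_const,
            ← hBdef, mul_assoc]
  -- change of variables for each half
  have hchL : (∫ x in ν..mid, f x) = c * ∫ γ in (0:ℝ)..1, f (-c * γ + mid) := by
    have h := intervalIntegral.integral_comp_mul_add (a := (0:ℝ)) (b := 1) (f := f)
      (neg_ne_zero.mpr (ne_of_gt hc0)) mid
    have e1 : -c * 0 + mid = mid := by ring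
    have e2 : -c * 1 + mid = ν := by rw [hcdef, hmiddef]; ring
    rw [e1, e2, intervalIntegral.integral_symm ν mid, smul_eq_mul] at h
    rw [h]
    field_simp
  have hchR : (∫ x in mid..μ, f x) = c * ∫ γ in (0:ℝ)..1, f (c * γ + mid) := by
    have h := intervalIntegral.integral_comp_mul_add (a := (0:ℝ)) (b := 1) (f := f)
      (ne_of_gt hc0) mid
    have e1 : c * 0 + mid = mid := by ring
    have e2 : c * 1 + mid = μ := by rw [hcdef, hmiddef]; ring
    rw [e1, e2, smul_eq_mul] at h
    rw [h]
    field_simp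
  -- the two half bounds
  have hptL : ∀ γ : ℝ, -c * γ + mid = γ * ν + m * (1 - γ) * cp := by
    intro γ
    have h1 : m * (1 - γ) * cp = (1 - γ) * mid := by
      rw [mul_comm m (1 - γ), mul_assoc, hmcp]
    rw [h1, hcdef, hmiddef]; ring
  have hptR : ∀ γ : ℝ, c * γ + mid = γ * μ + m * (1 - γ) * cp := by
    intro γ
    have h1 : m * (1 - γ) * cp = (1 - γ) * mid := by
      rw [mul_comm m (1 - γ), mul_assoc, hmcp]
    rw [h1, hcdef, hmiddef]; ring
  have hL := hhalf ν (hab hνI) (-c) (by rw [abs_neg, abs_of_pos hc0]) hptL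
  have hR := hhalf μ (hab hμI) c (abs_of_pos hc0) hptR
  -- final assembly
  rw [hT, hgν, hgμ, hgcp]
  have hint_qg : IntervalIntegrable (fun x => |(P x - P μ / 2) * g x|) volume ν μ :=
    hci _ ((hPcont.sub continuousOn_const).mul hgcI).abs ν hνI μ hμI
  have hint_f : ∀ x ∈ Set.Icc ν μ, ∀ y ∈ Set.Icc ν μ, IntervalIntegrable f volume x y :=
    hci f hfc
  calc |∫ x in ν..μ, (P x - P μ / 2) * g x|
      ≤ ∫ x in ν..μ, |(P x - P μ / 2) * g x| :=
        intervalIntegral.abs_integral_le_integral_abs hle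
    _ ≤ ∫ x in ν..μ, f x := by
        apply intervalIntegral.integral_mono_on hle hint_qg (hint_f ν hνI μ hμI)
        intro x hx
        rw [abs_mul]
        exact mul_le_mul_of_nonneg_right (hq x hx) (abs_nonneg _)
    _ = (∫ x in ν..mid, f x) + ∫ x in mid..μ, f x :=
        (intervalIntegral.integral_add_adjacent_intervals
          (hint_f ν hνI mid hmidI) (hint_f mid hmidI μ hμI)).symm
    _ ≤ c * (M * c * ((1 / (s + 2)) * |g ν| + m * B * |g cp|))
        + c * (M * c * ((1 / (s + 2)) * |g μ| + m * B * |g cp|)) := by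
        rw [hchL, hchR]
        exact add_le_add (mul_le_mul_of_nonneg_left hL hc0.le)
          (mul_le_mul_of_nonneg_left hR hc0.le)
    _ = (μ - ν) ^ 2 / 4 * M * ((1 / (s + 2)) * (|g ν| + |g μ|) + 2 * m * B * |g cp|) := by
        rw [hcdef]; ring
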